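/- For 0 < q < p ≤ 1, n ∈ ℕ, and x ∈ [0,1], the (p,q)-Bernstein-Durrmeyer operator D_n^{p,q} satisfies D_n^{p,q}(e₁, x) = p[n]_{p,q} x / [n+2]_{p,q}, where e₁(t) = t. -/

import Mathlib

noncomputable section

/-- The (p,q)-number [n]_{p,q} = (p^n - q^n)/(p - q). -/
def pqNum (p q : ℝ) (n : ℕ) : ℝ := (p ^ n - q ^ n) / (p - q)

/-- The (p,q)-factorial [n]_{p,q}!. -/
def pqFactorial (p q : ℝ) (n : ℕ) : ℝ := ∏ k ∈ Finset.range n, pqNum p q (k + 1)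

/-- The (p,q)-binomial coefficient. -/
def pqBinom (p q : ℝ) (n k : ℕ) : ℝ :=
  pqFactorial p q n / (pqFactorial p q (n - k) * pqFactorial p q k)

/-- The (p,q)-power basis (a ⊖ b)^n_{p,q} = ∏_{j=0}^{n-1} (p^j a - q^j b). -/
def pqPow (p q a b : ℝ) (n : ℕ) : ℝ := ∏ j ∈ Finset.range n, (p ^ j * a - q ^ j * b)

/-- The (p,q)-derivative. -/
def pqDeriv (p q : ℝ) (f : ℝ → ℝ) (x : ℝ) : ℝ := (f (p * x) - f (q * x)) / ((p - q) * x)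

/-- The (p,q)-integral of f over [0,1] (case 0 < q < p). -/
def pqInt (p q : ℝ) (f : ℝ → ℝ) : ℝ :=
  (p - q) * ∑' k : ℕ, (q ^ k / p ^ (k + 1)) * f (q ^ k / p ^ (k + 1))

/-- The (p,q)-Beta function B_{p,q}(m,n) = ∫₀¹ x^{m-1} (1 ⊖ qx)^{n-1} d_{p,q}x. -/
def pqBeta (p q : ℝ) (m n : ℕ) : ℝ :=
  pqInt p q (fun x => x ^ (m - 1) * pqPow p q 1 (q * x) (n - 1))

/-- The (p,q)-Gamma function: Γ_{p,q}(n+1) = [n]_{p,q}!. -/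
def pqGamma (p q : ℝ) (n : ℕ) : ℝ := pqFactorial p q (n - 1)

/-- The (p,q)-Bernstein basis b_{n,k}^{p,q}(1,x). -/
def bBasis (p q : ℝ) (n k : ℕ) (x : ℝ) : ℝ :=
  pqBinom p q n k * p ^ (k * (k - 1) / 2) / p ^ (n * (n - 1) / 2) * x ^ k *
    pqPow p q 1 x (n - k)

/-- The kernel b_{n,k}^{p,q}(t) = [n choose k] t^k (1 ⊖ qt)^{n-k}. -/
def bKernel (p q : ℝ) (n k : ℕ) (t : ℝ) : ℝ :=
  pqBinom p q n k * t ^ k * pqPow p q 1 (q * t) (n - k)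

/-- The (p,q)-Bernstein operator B_{n,p,q}(f,x). -/
def pqBernstein (p q : ℝ) (n : ℕ) (f : ℝ → ℝ) (x : ℝ) : ℝ :=
  ∑ k ∈ Finset.range (n + 1),
    bBasis p q n k x * f (p ^ (n - k) * pqNum p q k / pqNum p q n)

/-- The (p,q)-Bernstein-Durrmeyer operator D_n^{p,q}(f,x). -/
def pqDurrmeyer (p q : ℝ) (n : ℕ) (f : ℝ → ℝ) (x : ℝ) : ℝ :=
  pqNum p q (n + 1) *
    ∑ k ∈ Finset.Icc 1 n, (p ^ ((n - k + 1) * (n + k) / 2))⁻¹ * bBasis p q n k x *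
      pqInt p q (fun t => bKernel p q n (k - 1) t * f t)
  + bBasis p q n 0 x * f 0

section base
variable {p q : ℝ} (hq : 0 < q) (hqp : q < p)

include hq hqp

lemma hp0 : 0 < p := hq.trans hqp

lemma pqNum_pos {m : ℕ} (hm : m ≠ 0) : 0 < pqNum p q m := by
  have h1 : q ^ m < p ^ m := pow_lt_pow_left₀ hqp hq.le hm
  have : 0 < p - q := sub_pos.2 hqp
  exact div_pos (sub_pos.2 h1) this

lemma pqNum_ne {m : ℕ} (hm : m ≠ 0) : pqNum p q m ≠ 0 := (pqNum_pos hq hqp hm).ne'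

lemma pqFactorial_pos (n : ℕ) : 0 < pqFactorial p q n :=
  Finset.prod_pos fun k _ => pqNum_pos hq hqp (Nat.succ_ne_zero k)

lemma pqFactorial_ne (n : ℕ) : pqFactorial p q n ≠ 0 := (pqFactorial_pos hq hqp n).ne'

end base

lemma pqFactorial_succ (p q : ℝ) (n : ℕ) :
    pqFactorial p q (n + 1) = pqFactorial p q n * pqNum p q (n + 1) :=
  Finset.prod_range_succ _ n

lemma pqFactorial_zero (p q : ℝ) : pqFactorial p q 0 = 1 := rfl

lemma tri_succ (s : ℕ) : (s + 1) * (s + 2) / 2 = s * (s + 1) / 2 + (s + 1) := by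
  have h : (s + 1) * (s + 2) = s * (s + 1) + 2 * (s + 1) := by ring
  rw [h, Nat.add_mul_div_left _ _ (by norm_num : 0 < 2)]

lemma tri_pred (a : ℕ) : (a + 1) * ((a + 1) - 1) / 2 = a * (a - 1) / 2 + a := by
  cases a with
  | zero => simp
  | succ b =>
    simp only [Nat.add_sub_cancel]
    have h : (b + 1 + 1) * (b + 1) = (b + 1) * b + 2 * (b + 1) := by ring
    rw [h, Nat.add_mul_div_left _ _ (by norm_num : 0 < 2)]

section integral
variable {p q : ℝ} (hq : 0 < q) (hqp : q < p)
include hq hqp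

lemma node_mem (k : ℕ) : q ^ k / p ^ (k + 1) ∈ Set.Icc (0:ℝ) (1/p) := by
  have hp : 0 < p := hp0 hq hqp
  constructor
  · positivity
  · rw [div_le_div_iff₀ (by positivity) hp]
    have : q ^ k ≤ p ^ k := pow_le_pow_left₀ hq.le hqp.le k
    rw [pow_succ]
    nlinarith [pow_pos hp k]

lemma summable_node (f : ℝ → ℝ) (hf : Continuous f) :
    Summable (fun k : ℕ => (q ^ k / p ^ (k + 1)) * f (q ^ k / p ^ (k + 1))) := by
  have hp : 0 < p := hp0 hq hqp
  obtain ⟨C, hC⟩ := (isCompact_Icc (a := (0:ℝ)) (b := 1/p)).exists_bound_of_continuousOn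
    hf.continuousOn
  apply Summable.of_norm_bounded (g := fun k : ℕ => (C/p) * (q/p) ^ k)
  · exact (summable_geometric_of_lt_one (by positivity) (by
      rw [div_lt_one hp]; exact hqp)).mul_left _
  · intro k
    have hmem := node_mem hq hqp k
    have h1 : |f (q ^ k / p ^ (k + 1))| ≤ C := hC _ hmem
    have h2 : (0:ℝ) ≤ q ^ k / p ^ (k + 1) := hmem.1
    have h3 : q ^ k / p ^ (k + 1) ≤ (1/p) * (q/p)^k := by
      have : q ^ k / p ^ (k + 1) = (1/p) * (q/p)^k := by
        rw [div_pow, pow_succ]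
        field_simp
      exact this.le
    rw [Real.norm_eq_abs, abs_mul, abs_of_nonneg h2]
    have hCpos : 0 ≤ C := le_trans (abs_nonneg _) h1
    calc q ^ k / p ^ (k + 1) * |f (q ^ k / p ^ (k + 1))|
        ≤ ((1/p) * (q/p)^k) * C := by
          apply mul_le_mul h3 h1 (abs_nonneg _) (by positivity)
      _ = C / p * (q / p) ^ k := by ring

lemma pqInt_const_mul (c : ℝ) (f : ℝ → ℝ) :
    pqInt p q (fun t => c * f t) = c * pqInt p q f := by
  unfold pqInt
  rw [show (fun k : ℕ => (q ^ k / p ^ (k + 1)) * (c * f (q ^ k / p ^ (k + 1))))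
      = fun k : ℕ => c * ((q ^ k / p ^ (k + 1)) * f (q ^ k / p ^ (k + 1))) from
    funext fun k => by ring]
  rw [tsum_mul_left]
  ring

lemma pqInt_sub (f g : ℝ → ℝ) (hf : Continuous f) (hg : Continuous g) :
    pqInt p q (fun t => f t - g t) = pqInt p q f - pqInt p q g := by
  unfold pqInt
  rw [show (fun k : ℕ => (q ^ k / p ^ (k + 1)) * (f (q ^ k / p ^ (k + 1)) - g (q ^ k / p ^ (k + 1))))
      = fun k : ℕ => (q ^ k / p ^ (k + 1)) * f (q ^ k / p ^ (k + 1))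
        - (q ^ k / p ^ (k + 1)) * g (q ^ k / p ^ (k + 1)) from
    funext fun k => by ring]
  rw [Summable.tsum_sub (summable_node hq hqp f hf) (summable_node hq hqp g hg)]
  ring

lemma pqInt_pow (a : ℕ) : pqInt p q (fun t => t ^ a) = 1 / pqNum p q (a + 1) := by
  have hp : 0 < p := hp0 hq hqp
  have hr : (q/p) ^ (a+1) < 1 := by
    apply pow_lt_one₀ (by positivity) (by rw [div_lt_one hp]; exact hqp) (Nat.succ_ne_zero a)
  have key : ∀ k : ℕ, (q ^ k / p ^ (k + 1)) * (q ^ k / p ^ (k + 1)) ^ a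
      = (1 / p ^ (a+1)) * ((q/p)^(a+1)) ^ k := by
    intro k
    rw [← pow_succ']
    simp only [div_pow, ← pow_mul]
    rw [div_mul_div_comm, one_mul, div_eq_div_iff (by positivity) (by positivity),
      ← pow_add]
    congr 1 <;> ring
  unfold pqInt
  simp only [key]
  rw [tsum_mul_left, tsum_geometric_of_lt_one (by positivity) hr]
  unfold pqNum
  have h1 : (1:ℝ) - (q/p)^(a+1) = (p^(a+1) - q^(a+1)) / p^(a+1) := by
    field_simp
    rw [sub_mul, div_pow, div_mul_cancel₀ _ (by positivity)]
    ring
  rw [h1]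
  have h2 : p^(a+1) - q^(a+1) > 0 := sub_pos.2 (pow_lt_pow_left₀ hqp hq.le (Nat.succ_ne_zero a))
  field_simp

end integral

lemma continuous_pqPow (p q c : ℝ) (s : ℕ) :
    Continuous (fun t : ℝ => pqPow p q 1 (c * t) s) := by
  unfold pqPow
  fun_prop

section jlem
variable {p q : ℝ} (hq : 0 < q) (hqp : q < p)
include hq hqp

lemma pqNum_split (a s : ℕ) :
    pqNum p q (a + s + 2) = q ^ (s+1) * pqNum p q (a+1) + p ^ (a+1) * pqNum p q (s+1) := by
  unfold pqNum
  have hpq : p - q ≠ 0 := sub_ne_zero.2 (ne_of_gt hqp)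
  field_simp
  have e1 : a + s + 2 = (a+1) + (s+1) := by ring
  rw [e1, pow_add, pow_add]
  ring

lemma pqInt_J (s a : ℕ) :
    pqInt p q (fun t => t ^ a * pqPow p q 1 (q * t) s)
      = p ^ (a * s + s * (s+1) / 2) * pqFactorial p q a * pqFactorial p q s
        / pqFactorial p q (a + s + 1) := by
  induction s generalizing a with
  | zero =>
    simp only [pqPow, Finset.range_zero, Finset.prod_empty, mul_one]
    rw [pqInt_pow hq hqp]
    rw [pqFactorial_succ]
    simp only [Nat.mul_zero, Nat.zero_mul, Nat.zero_div, pow_zero, Nat.add_zero,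
      pqFactorial_zero, mul_one, one_mul]
    have h1 := pqFactorial_ne hq hqp (p := p) (q := q) a
    have h2 := pqNum_ne hq hqp (p := p) (q := q) (Nat.succ_ne_zero a)
    field_simp
  | succ s ih =>
    have hsplit : (fun t : ℝ => t ^ a * pqPow p q 1 (q * t) (s+1))
        = fun t : ℝ => p ^ s * (t ^ a * pqPow p q 1 (q * t) s)
            - q ^ (s+1) * (t ^ (a+1) * pqPow p q 1 (q * t) s) := by
      funext t
      unfold pqPow
      rw [Finset.prod_range_succ]
      ring
    rw [hsplit]
    rw [pqInt_sub hq hqp (fun t => p ^ s * (t ^ a * pqPow p q 1 (q * t) s))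
      (fun t => q ^ (s+1) * (t ^ (a+1) * pqPow p q 1 (q * t) s))
      (by have := continuous_pqPow p q q s; fun_prop)
      (by have := continuous_pqPow p q q s; fun_prop)]
    rw [pqInt_const_mul hq hqp, pqInt_const_mul hq hqp, ih a, ih (a+1)]
    have hfac1 : pqFactorial p q (a + (s+1) + 1) = pqFactorial p q (a + s + 1) * pqNum p q (a + s + 2) := by
      have : a + (s+1) + 1 = (a + s + 1) + 1 := by ring
      rw [this, pqFactorial_succ]
    have hfac2 : pqFactorial p q ((a+1) + s + 1) = pqFactorial p q (a + s + 1) * pqNum p q (a + s + 2) := by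
      have : (a+1) + s + 1 = (a + s + 1) + 1 := by ring
      rw [this, pqFactorial_succ]
    have hfac3 : pqFactorial p q (s+1) = pqFactorial p q s * pqNum p q (s+1) := pqFactorial_succ p q s
    have hfac4 : pqFactorial p q (a+1) = pqFactorial p q a * pqNum p q (a+1) := pqFactorial_succ p q a
    rw [hfac1, hfac2, hfac3, hfac4]
    have e2 : (a+1) * s + s * (s+1)/2 = a * s + s * (s+1)/2 + s := by
      rw [Nat.succ_mul]; omega
    have e3 : a * (s+1) + (s+1) * (s+2)/2 = (a * s + s * (s+1)/2 + s) + (a + 1) := by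
      rw [tri_succ, Nat.mul_succ]
      generalize a * s = m
      generalize s * (s+1)/2 = t
      omega
    rw [e2, e3]
    have hns := pqNum_split hq hqp (p := p) (q := q) a s
    have h1 : pqFactorial p q (a+s+1) ≠ 0 := pqFactorial_ne hq hqp _
    have h2 : pqNum p q (a+s+2) ≠ 0 := pqNum_ne hq hqp (by omega)
    field_simp
    rw [hns, pow_add, pow_add]
    ring
end jlem

section bern
variable {p q : ℝ} (hq : 0 < q) (hqp : q < p)
include hq hqp

lemma pqBinom_zero (n : ℕ) : pqBinom p q n 0 = 1 := by
  unfold pqBinom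
  rw [Nat.sub_zero, pqFactorial_zero, mul_one, div_self (pqFactorial_ne hq hqp n)]

lemma pqBinom_self (n : ℕ) : pqBinom p q n n = 1 := by
  unfold pqBinom
  rw [Nat.sub_self, pqFactorial_zero, one_mul, div_self (pqFactorial_ne hq hqp n)]

lemma pqPascal (m j : ℕ) :
    pqBinom p q (m+j+2) (j+1)
      = p^(j+1) * pqBinom p q (m+j+1) (j+1) + q^(m+1) * pqBinom p q (m+j+1) j := by
  unfold pqBinom
  have e1 : m+j+2 - (j+1) = m+1 := by omega
  have e2 : m+j+1 - (j+1) = m := by omega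
  have e3 : m+j+1 - j = m+1 := by omega
  rw [e1, e2, e3]
  have e4 : m+j+2 = (m+j+1)+1 := rfl
  rw [e4, pqFactorial_succ p q (m+j+1), pqFactorial_succ p q j, pqFactorial_succ p q m]
  have h1 := pqFactorial_ne hq hqp (p := p) (q := q) (m+j+1)
  have h2 := pqFactorial_ne hq hqp (p := p) (q := q) m
  have h3 := pqFactorial_ne hq hqp (p := p) (q := q) j
  have h4 := pqNum_ne hq hqp (p := p) (q := q) (Nat.succ_ne_zero m)
  have h5 := pqNum_ne hq hqp (p := p) (q := q) (Nat.succ_ne_zero j)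
  have hns : pqNum p q (m+j+1+1) = q^(m+1) * pqNum p q (j+1) + p^(j+1) * pqNum p q (m+1) := by
    have : m+j+1+1 = j+m+2 := by omega
    rw [this, pqNum_split hq hqp j m]
  rw [hns]
  field_simp
  ring

lemma bern_e0 (n : ℕ) (x : ℝ) :
    ∑ k ∈ Finset.range (n+1),
        pqBinom p q n k * p ^ (k*(k-1)/2) * x^k * pqPow p q 1 x (n-k)
      = p ^ (n*(n-1)/2) := by
  induction n with
  | zero =>
    simp [pqPow, pqBinom_zero hq hqp]
  | succ n ih =>
    set f : ℕ → ℝ := fun k =>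
      pqBinom p q (n+1) k * p ^ (k*(k-1)/2) * x^k * pqPow p q 1 x (n+1-k) with hf
    set g : ℕ → ℝ := fun k =>
      p^k * pqBinom p q n k * p ^ (k*(k-1)/2) * x^k * pqPow p q 1 x (n+1-k) with hg
    set h : ℕ → ℝ := fun k =>
      q^(n-k) * pqBinom p q n k * p ^ (k*(k+1)/2) * x^(k+1) * pqPow p q 1 x (n-k) with hh
    have claim1 : ∑ k ∈ Finset.range (n+2), f k
        = ∑ k ∈ Finset.range (n+1), g k + ∑ k ∈ Finset.range (n+1), h k := by
      rw [Finset.sum_range_succ' f (n+1), Finset.sum_range_succ' g n]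
      have hf0g0 : f 0 = g 0 := by
        simp only [hf, hg, pow_zero, one_mul, Nat.sub_zero,
          pqBinom_zero hq hqp]
      have hfn1 : f (n+1) = h n := by
        simp only [hf, hh, Nat.sub_self, pow_zero, one_mul,
          pqBinom_self hq hqp, pqBinom_self hq hqp]
        have : (n+1)*((n+1)-1)/2 = n*(n+1)/2 := by
          simp [Nat.add_sub_cancel, Nat.mul_comm]
        rw [this]
      have hmid : ∀ i ∈ Finset.range n, f (i+1) = g (i+1) + h i := by
        intro i hi
        have hin : i < n := Finset.mem_range.1 hi
        have hP : pqBinom p q (n+1) (i+1)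
            = p^(i+1) * pqBinom p q n (i+1) + q^(n-i) * pqBinom p q n i := by
          have := pqPascal hq hqp (n-1-i) i
          have e5 : n-1-i+i+2 = n+1 := by omega
          have e6 : n-1-i+i+1 = n := by omega
          have e7 : n-1-i+1 = n-i := by omega
          rw [e5, e6, e7] at this
          exact this
        simp only [hf, hg, hh]
        rw [hP]
        have e8 : n+1-(i+1) = n-i := by omega
        have e9 : (i+1)*((i+1)-1)/2 = i*(i+1)/2 := by
          simp [Nat.add_sub_cancel, Nat.mul_comm]
        rw [e8, e9]
        ring
      rw [Finset.sum_range_succ (fun i => f (i+1)) n, Finset.sum_congr rfl hmid, hfn1,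
        Finset.sum_range_succ h n]
      rw [Finset.sum_add_distrib]
      ring_nf
      rw [hf0g0]
    have claim2 : ∀ k ∈ Finset.range (n+1), g k + h k
        = p^n * (pqBinom p q n k * p ^ (k*(k-1)/2) * x^k * pqPow p q 1 x (n-k)) := by
      intro k hk
      have hkn : k ≤ n := Nat.lt_succ_iff.1 (Finset.mem_range.1 hk)
      simp only [hg, hh]
      have e10 : n+1-k = (n-k)+1 := by omega
      rw [e10]
      unfold pqPow
      rw [Finset.prod_range_succ]
      have e11 : k*(k+1)/2 = k*(k-1)/2 + k := by
        cases k with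
        | zero => simp
        | succ b =>
          simp only [Nat.add_sub_cancel]
          rw [Nat.mul_comm (b+1) b]
          exact tri_succ b
      rw [e11, pow_add]
      have e13 : p^n = p^k * p^(n-k) := by
        rw [← pow_add]
        congr 1
        omega
      rw [e13]
      ring
    calc ∑ k ∈ Finset.range (n+2), f k
        = ∑ k ∈ Finset.range (n+1), (g k + h k) := by
          rw [claim1, Finset.sum_add_distrib]
      _ = ∑ k ∈ Finset.range (n+1),
            p^n * (pqBinom p q n k * p ^ (k*(k-1)/2) * x^k * pqPow p q 1 x (n-k)) := by
          exact Finset.sum_congr rfl claim2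
      _ = p^n * p^(n*(n-1)/2) := by rw [← Finset.mul_sum, ih]
      _ = p^((n+1)*((n+1)-1)/2) := by
          rw [← pow_add, tri_pred n]
          congr 1
          omega

lemma binom_mul_num (m i : ℕ) (hi : i ≤ m) :
    pqNum p q (i+1) * pqBinom p q (m+1) (i+1) = pqNum p q (m+1) * pqBinom p q m i := by
  unfold pqBinom
  have e1 : m+1-(i+1) = m-i := by omega
  rw [e1, pqFactorial_succ p q m, pqFactorial_succ p q i]
  have h1 := pqFactorial_ne hq hqp (p := p) (q := q) m
  have h2 := pqFactorial_ne hq hqp (p := p) (q := q) i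
  have h3 := pqFactorial_ne hq hqp (p := p) (q := q) (m-i)
  have h4 := pqNum_ne hq hqp (p := p) (q := q) (Nat.succ_ne_zero i)
  field_simp

lemma bern_e1 (n : ℕ) (x : ℝ) :
    ∑ k ∈ Finset.range (n+1),
        pqBinom p q n k * p ^ (k*(k-1)/2) * x^k * pqPow p q 1 x (n-k)
          * (p ^ (n-k) * pqNum p q k)
      = p ^ (n*(n-1)/2) * pqNum p q n * x := by
  cases n with
  | zero =>
    simp [pqNum]
  | succ m =>
    rw [Finset.sum_range_succ']
    have h0 : pqBinom p q (m+1) 0 * p ^ (0*(0-1)/2) * x^0 * pqPow p q 1 x (m+1-0)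
        * (p ^ (m+1-0) * pqNum p q 0) = 0 := by
      simp [pqNum]
    rw [h0, add_zero]
    have hterm : ∀ i ∈ Finset.range (m+1),
        pqBinom p q (m+1) (i+1) * p ^ ((i+1)*((i+1)-1)/2) * x^(i+1)
            * pqPow p q 1 x (m+1-(i+1)) * (p ^ (m+1-(i+1)) * pqNum p q (i+1))
        = (pqNum p q (m+1) * x * p^m)
            * (pqBinom p q m i * p ^ (i*(i-1)/2) * x^i * pqPow p q 1 x (m-i)) := by
      intro i hi
      have him : i ≤ m := Nat.lt_succ_iff.1 (Finset.mem_range.1 hi)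
      have e1 : m+1-(i+1) = m-i := by omega
      rw [e1]
      have e2 : (i+1)*((i+1)-1)/2 = i*(i-1)/2 + i := by
        simp only [Nat.add_sub_cancel]
        cases i with
        | zero => simp
        | succ b =>
          simp only [Nat.add_sub_cancel]
          rw [Nat.mul_comm (b+1+1) (b+1), Nat.mul_comm (b+1) b]
          exact tri_succ b
      have e3 : p ^ (m-i) * p^i = p^m := by
        rw [← pow_add]
        congr 1
        omega
      rw [e2, pow_add]
      have key := binom_mul_num hq hqp m i him
      calc pqBinom p q (m+1) (i+1) * (p ^ (i*(i-1)/2) * p^i) * x^(i+1)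
            * pqPow p q 1 x (m-i) * (p ^ (m-i) * pqNum p q (i+1))
          = (pqNum p q (i+1) * pqBinom p q (m+1) (i+1))
              * (p ^ (i*(i-1)/2) * (p^(m-i) * p^i)) * x^(i+1) * pqPow p q 1 x (m-i) := by
            ring
        _ = (pqNum p q (m+1) * pqBinom p q m i)
              * (p ^ (i*(i-1)/2) * p^m) * x^(i+1) * pqPow p q 1 x (m-i) := by
            rw [key, e3]
        _ = (pqNum p q (m+1) * x * p^m)
            * (pqBinom p q m i * p ^ (i*(i-1)/2) * x^i * pqPow p q 1 x (m-i)) := by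
            ring
    rw [Finset.sum_congr rfl hterm, ← Finset.mul_sum, bern_e0 hq hqp m x]
    have e4 : p^m * p^(m*(m-1)/2) = p^((m+1)*((m+1)-1)/2) := by
      rw [← pow_add, tri_pred m]
      congr 1
      omega
    calc pqNum p q (m+1) * x * p^m * p^(m*(m-1)/2)
        = (p^m * p^(m*(m-1)/2)) * pqNum p q (m+1) * x := by ring
      _ = p^((m+1)*((m+1)-1)/2) * pqNum p q (m+1) * x := by rw [e4]

end bern


lemma expkey (k n : ℕ) (h1 : 1 ≤ k) (h2 : k ≤ n) :
    k*(n-k+1) + (n-k+1)*(n-k+2)/2 = (n-k+1)*(n+k)/2 + (n-k+1) := by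
  obtain ⟨j, rfl⟩ : ∃ j, k = j+1 := ⟨k-1, by omega⟩
  obtain ⟨m, rfl⟩ : ∃ m, n = m+j+1 := ⟨n-j-1, by omega⟩
  simp only [show m+j+1-(j+1) = m from by omega]
  have h3 : (m+1)*(m+j+1+(j+1)) = (m+1)*(m+2) + 2*((m+1)*j) := by ring
  rw [h3, Nat.add_mul_div_left _ _ (by norm_num : 0 < 2)]
  generalize (m+1)*(m+2)/2 = T
  ring

section final
variable {p q : ℝ} (hq : 0 < q) (hqp : q < p)
include hq hqp

lemma pqInt_bKernel (n k : ℕ) (h1 : 1 ≤ k) (h2 : k ≤ n) :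
    pqInt p q (fun t => bKernel p q n (k-1) t * t)
      = pqBinom p q n (k-1) * (p ^ (k*(n-k+1) + (n-k+1)*(n-k+2)/2)
          * pqFactorial p q k * pqFactorial p q (n-k+1) / pqFactorial p q (n+2)) := by
  have hfun : (fun t : ℝ => bKernel p q n (k-1) t * t)
      = fun t : ℝ => pqBinom p q n (k-1) * (t^k * pqPow p q 1 (q*t) (n-k+1)) := by
    funext t
    unfold bKernel
    have e1 : n-(k-1) = n-k+1 := by omega
    rw [e1]
    have e2 : t^(k-1) * t = t^k := by
      rw [← pow_succ]
      congr 1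
      omega
    calc pqBinom p q n (k-1) * t^(k-1) * pqPow p q 1 (q*t) (n-k+1) * t
        = pqBinom p q n (k-1) * ((t^(k-1) * t) * pqPow p q 1 (q*t) (n-k+1)) := by ring
      _ = pqBinom p q n (k-1) * (t^k * pqPow p q 1 (q*t) (n-k+1)) := by rw [e2]
  rw [hfun, pqInt_const_mul hq hqp, pqInt_J hq hqp,
    show (n-k+1)+1 = n-k+2 from by omega,
    show k + (n-k+1) + 1 = n+2 from by omega]

set_option maxHeartbeats 1000000 in
theorem pqDurrmeyer_e1' (n : ℕ) (x : ℝ) :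
    pqDurrmeyer p q n (fun t => t) x = p * pqNum p q n * x / pqNum p q (n + 2) := by
  have hp : (0:ℝ) < p := hp0 hq hqp
  have hFn := pqFactorial_ne hq hqp (p := p) (q := q) n
  set F : ℕ → ℝ := fun k =>
    pqBinom p q n k * p ^ (k*(k-1)/2) * x^k * pqPow p q 1 x (n-k)
      * (p ^ (n-k) * pqNum p q k) with hF
  set c : ℝ := pqFactorial p q n / pqFactorial p q (n+2) * p / p^(n*(n-1)/2) with hc
  unfold pqDurrmeyer
  simp only [mul_zero, add_zero]
  have hterm : ∀ k ∈ Finset.Icc 1 n,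
      (p ^ ((n-k+1)*(n+k)/2))⁻¹ * bBasis p q n k x
          * pqInt p q (fun t => bKernel p q n (k-1) t * t)
        = c * F k := by
    intro k hk
    obtain ⟨h1, h2⟩ := Finset.mem_Icc.1 hk
    have n1 := pqFactorial_ne hq hqp (p := p) (q := q) (n-k+1)
    have n2 := pqFactorial_ne hq hqp (p := p) (q := q) (k-1)
    have n3 := pqFactorial_ne hq hqp (p := p) (q := q) (n+2)
    have n5 : (p:ℝ) ^ (n*(n-1)/2) ≠ 0 := pow_ne_zero _ hp.ne'
    have n6 : (p:ℝ) ^ ((n-k+1)*(n+k)/2) ≠ 0 := pow_ne_zero _ hp.ne'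
    have hW : p^(k*(n-k+1) + (n-k+1)*(n-k+2)/2)
        = p^((n-k+1)*(n+k)/2) * p^(n-k) * p := by
      rw [mul_assoc, ← pow_succ, ← pow_add]
      congr 1
      have := expkey k n h1 h2
      omega
    have hfk : pqFactorial p q k = pqFactorial p q (k-1) * pqNum p q k := by
      conv_lhs => rw [show k = (k-1)+1 from by omega]
      rw [pqFactorial_succ, show (k-1)+1 = k from by omega]
    have hb : pqBinom p q n (k-1)
        = pqFactorial p q n / (pqFactorial p q (n-k+1) * pqFactorial p q (k-1)) := by
      unfold pqBinom
      rw [show n-(k-1) = n-k+1 from by omega]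
    trans (bBasis p q n k x * (pqNum p q k * (p ^ (n-k) * p))
      * (pqFactorial p q n / pqFactorial p q (n+2)))
    · rw [pqInt_bKernel hq hqp n k h1 h2, hb, hfk, hW]
      generalize (p:ℝ) ^ ((n-k+1)*(n+k)/2) = P at n6 ⊢
      field_simp
    · simp only [hF, hc]
      unfold bBasis
      field_simp
  rw [Finset.sum_congr rfl hterm, ← Finset.mul_sum]
  have hF0 : F 0 = 0 := by
    simp [hF, pqNum]
  have hIcc : ∑ k ∈ Finset.Icc 1 n, F k = ∑ k ∈ Finset.range (n+1), F k := by
    rw [← Finset.Ico_add_one_right_eq_Icc, Finset.sum_Ico_eq_sum_range,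
      show n+1-1 = n from rfl, Finset.sum_range_succ' F n, hF0, add_zero]
    exact Finset.sum_congr rfl fun i _ => by rw [Nat.add_comm]
  rw [hIcc]
  have hb := bern_e1 hq hqp (p := p) (q := q) n x
  rw [hb, hc]
  have hf2 : pqFactorial p q (n+2) = pqFactorial p q n * pqNum p q (n+1) * pqNum p q (n+2) := by
    rw [show n+2 = (n+1)+1 from rfl, pqFactorial_succ, pqFactorial_succ,
      show n+1+1 = n+2 from rfl]
  rw [hf2]
  have n5 : (p:ℝ) ^ (n*(n-1)/2) ≠ 0 := pow_ne_zero _ hp.ne'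
  have n7 := pqNum_ne hq hqp (p := p) (q := q) (show n+1 ≠ 0 from by omega)
  have n8 := pqNum_ne hq hqp (p := p) (q := q) (show n+2 ≠ 0 from by omega)
  field_simp

end final

theorem pqDurrmeyer_e1 (p q : ℝ) (hq : 0 < q) (hqp : q < p) (hp : p ≤ 1)
    (n : ℕ) (x : ℝ) (hx : x ∈ Set.Icc (0 : ℝ) 1) :
    pqDurrmeyer p q n (fun t => t) x = p * pqNum p q n * x / pqNum p q (n + 2) := by
  exact pqDurrmeyer_e1' hq hqp n x
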